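/- The space P₂ of homogeneous polynomials of degree 2 in R is the internal direct sum of the seven subspaces V₀⁺, V₀⁻, V₁⁺, V₁⁻, V₂⁺, V₂⁻, V₃ (i.e., these subspaces form an independent family whose sum is all of P₂), and each of the seven subspaces is invariant under both S and T. -/

import Mathlib

open MvPolynomial

noncomputable section

abbrev R6 : Type := MvPolynomial (Fin 6) ℂ

/-- `ε = exp(2πi/6)`, a primitive 6th root of unity. -/
def ε : ℂ := Complex.exp (2 * Real.pi * Complex.I / 6)

/-- The Heisenberg generator `S`, the `ℂ`-algebra map with `S xᵢ = x_{i+1 mod 6}`. -/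
def Sh : R6 →ₐ[ℂ] R6 := aeval fun i : Fin 6 => X (i + 1)

/-- The Heisenberg generator `T`, the `ℂ`-algebra map with `T xᵢ = εⁱ xᵢ`. -/
def Tw : R6 →ₐ[ℂ] R6 := aeval fun i : Fin 6 => C (ε ^ (i : ℕ)) * X i

/-- The space of homogeneous polynomials of degree 2. -/
def P2 : Submodule ℂ R6 := homogeneousSubmodule (Fin 6) ℂ 2

def V0p : Submodule ℂ R6 :=
  Submodule.span ℂ {X 0 ^ 2 + X 3 ^ 2, X 1 ^ 2 + X 4 ^ 2, X 2 ^ 2 + X 5 ^ 2}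
def V0m : Submodule ℂ R6 :=
  Submodule.span ℂ {X 0 ^ 2 - X 3 ^ 2, X 1 ^ 2 - X 4 ^ 2, X 2 ^ 2 - X 5 ^ 2}
def V1p : Submodule ℂ R6 :=
  Submodule.span ℂ {X 0 * X 1 + X 3 * X 4, X 1 * X 2 + X 4 * X 5, X 2 * X 3 + X 5 * X 0}
def V1m : Submodule ℂ R6 :=
  Submodule.span ℂ {X 0 * X 1 - X 3 * X 4, X 1 * X 2 - X 4 * X 5, X 2 * X 3 - X 5 * X 0}
def V2p : Submodule ℂ R6 :=
  Submodule.span ℂ {X 0 * X 2 + X 3 * X 5, X 1 * X 3 + X 4 * X 0, X 2 * X 4 + X 5 * X 1}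
def V2m : Submodule ℂ R6 :=
  Submodule.span ℂ {X 0 * X 2 - X 3 * X 5, X 1 * X 3 - X 4 * X 0, X 2 * X 4 - X 5 * X 1}
def V3 : Submodule ℂ R6 :=
  Submodule.span ℂ {X 0 * X 3, X 1 * X 4, X 2 * X 5}

/-- The seven subspaces of `P₂`, as a family indexed by `Fin 7`. -/
def Vfam : Fin 7 → Submodule ℂ R6 := ![V0p, V0m, V1p, V1m, V2p, V2m, V3]

/-! ### Auxiliary machinery -/

private def dd (i j : Fin 6) : Fin 6 →₀ ℕ := Finsupp.single i 1 + Finsupp.single j 1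

private lemma coeff_XX (i j : Fin 6) (d : Fin 6 →₀ ℕ) :
    coeff d (X i * X j : R6) = if dd i j = d then 1 else 0 := by
  rw [dd, X, X, monomial_mul, coeff_monomial, one_mul]

private lemma coeff_XX2 (i : Fin 6) (d : Fin 6 →₀ ℕ) :
    coeff d (X i ^ 2 : R6) = if dd i i = d then 1 else 0 := by
  rw [pow_two, coeff_XX]

private lemma dd_eq_iff (i j k l : Fin 6) :
    dd i j = dd k l ↔ (i = k ∧ j = l) ∨ (i = l ∧ j = k) := by
  rw [dd, dd, Finsupp.single_add_single_eq_single_add_single one_ne_zero one_ne_zero]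
  norm_num

private def bb : Fin 7 → Fin 3 → R6 :=
  ![![X 0 ^ 2 + X 3 ^ 2, X 1 ^ 2 + X 4 ^ 2, X 2 ^ 2 + X 5 ^ 2],
    ![X 0 ^ 2 - X 3 ^ 2, X 1 ^ 2 - X 4 ^ 2, X 2 ^ 2 - X 5 ^ 2],
    ![X 0 * X 1 + X 3 * X 4, X 1 * X 2 + X 4 * X 5, X 2 * X 3 + X 5 * X 0],
    ![X 0 * X 1 - X 3 * X 4, X 1 * X 2 - X 4 * X 5, X 2 * X 3 - X 5 * X 0],
    ![X 0 * X 2 + X 3 * X 5, X 1 * X 3 + X 4 * X 0, X 2 * X 4 + X 5 * X 1],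
    ![X 0 * X 2 - X 3 * X 5, X 1 * X 3 - X 4 * X 0, X 2 * X 4 - X 5 * X 1],
    ![X 0 * X 3, X 1 * X 4, X 2 * X 5]]

private lemma bb_0_0 : bb 0 0 = X 0 ^ 2 + X 3 ^ 2 := rfl
private lemma bb_0_1 : bb 0 1 = X 1 ^ 2 + X 4 ^ 2 := rfl
private lemma bb_0_2 : bb 0 2 = X 2 ^ 2 + X 5 ^ 2 := rfl
private lemma bb_1_0 : bb 1 0 = X 0 ^ 2 - X 3 ^ 2 := rfl
private lemma bb_1_1 : bb 1 1 = X 1 ^ 2 - X 4 ^ 2 := rfl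
private lemma bb_1_2 : bb 1 2 = X 2 ^ 2 - X 5 ^ 2 := rfl
private lemma bb_2_0 : bb 2 0 = X 0 * X 1 + X 3 * X 4 := rfl
private lemma bb_2_1 : bb 2 1 = X 1 * X 2 + X 4 * X 5 := rfl
private lemma bb_2_2 : bb 2 2 = X 2 * X 3 + X 5 * X 0 := rfl
private lemma bb_3_0 : bb 3 0 = X 0 * X 1 - X 3 * X 4 := rfl
private lemma bb_3_1 : bb 3 1 = X 1 * X 2 - X 4 * X 5 := rfl
private lemma bb_3_2 : bb 3 2 = X 2 * X 3 - X 5 * X 0 := rfl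
private lemma bb_4_0 : bb 4 0 = X 0 * X 2 + X 3 * X 5 := rfl
private lemma bb_4_1 : bb 4 1 = X 1 * X 3 + X 4 * X 0 := rfl
private lemma bb_4_2 : bb 4 2 = X 2 * X 4 + X 5 * X 1 := rfl
private lemma bb_5_0 : bb 5 0 = X 0 * X 2 - X 3 * X 5 := rfl
private lemma bb_5_1 : bb 5 1 = X 1 * X 3 - X 4 * X 0 := rfl
private lemma bb_5_2 : bb 5 2 = X 2 * X 4 - X 5 * X 1 := rfl
private lemma bb_6_0 : bb 6 0 = X 0 * X 3 := rfl
private lemma bb_6_1 : bb 6 1 = X 1 * X 4 := rfl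
private lemma bb_6_2 : bb 6 2 = X 2 * X 5 := rfl

private lemma range3 (a b c : R6) : Set.range ![a, b, c] = {a, b, c} := by
  ext x
  simp [Matrix.range_cons, Matrix.range_empty]
  tauto

private lemma hVfam_eq0 : Vfam 0 = Submodule.span ℂ (Set.range (bb 0)) := by
  rw [show bb 0 = ![X 0 ^ 2 + X 3 ^ 2, X 1 ^ 2 + X 4 ^ 2, X 2 ^ 2 + X 5 ^ 2] from rfl, range3]; rfl

private lemma hVfam_eq1 : Vfam 1 = Submodule.span ℂ (Set.range (bb 1)) := by
  rw [show bb 1 = ![X 0 ^ 2 - X 3 ^ 2, X 1 ^ 2 - X 4 ^ 2, X 2 ^ 2 - X 5 ^ 2] from rfl, range3]; rfl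

private lemma hVfam_eq2 : Vfam 2 = Submodule.span ℂ (Set.range (bb 2)) := by
  rw [show bb 2 = ![X 0 * X 1 + X 3 * X 4, X 1 * X 2 + X 4 * X 5, X 2 * X 3 + X 5 * X 0] from rfl, range3]; rfl

private lemma hVfam_eq3 : Vfam 3 = Submodule.span ℂ (Set.range (bb 3)) := by
  rw [show bb 3 = ![X 0 * X 1 - X 3 * X 4, X 1 * X 2 - X 4 * X 5, X 2 * X 3 - X 5 * X 0] from rfl, range3]; rfl

private lemma hVfam_eq4 : Vfam 4 = Submodule.span ℂ (Set.range (bb 4)) := by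
  rw [show bb 4 = ![X 0 * X 2 + X 3 * X 5, X 1 * X 3 + X 4 * X 0, X 2 * X 4 + X 5 * X 1] from rfl, range3]; rfl

private lemma hVfam_eq5 : Vfam 5 = Submodule.span ℂ (Set.range (bb 5)) := by
  rw [show bb 5 = ![X 0 * X 2 - X 3 * X 5, X 1 * X 3 - X 4 * X 0, X 2 * X 4 - X 5 * X 1] from rfl, range3]; rfl

private lemma hVfam_eq6 : Vfam 6 = Submodule.span ℂ (Set.range (bb 6)) := by
  rw [show bb 6 = ![X 0 * X 3, X 1 * X 4, X 2 * X 5] from rfl, range3]; rfl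

private lemma hVfam_eq : ∀ i, Vfam i = Submodule.span ℂ (Set.range (bb i)) := by
  intro i
  fin_cases i
  exacts [hVfam_eq0, hVfam_eq1, hVfam_eq2, hVfam_eq3, hVfam_eq4, hVfam_eq5, hVfam_eq6]

set_option maxHeartbeats 2000000 in
private lemma hli : LinearIndependent ℂ (fun q : Fin 7 × Fin 3 => bb q.1 q.2) := by
  rw [Fintype.linearIndependent_iff]
  intro g hg
  simp only [Fintype.sum_prod_type, Fin.sum_univ_seven, Fin.sum_univ_three,
    bb_0_0, bb_0_1, bb_0_2, bb_1_0, bb_1_1, bb_1_2, bb_2_0, bb_2_1, bb_2_2, bb_3_0, bb_3_1, bb_3_2, bb_4_0, bb_4_1, bb_4_2, bb_5_0, bb_5_1, bb_5_2, bb_6_0, bb_6_1, bb_6_2] at hg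
  have E0 := congrArg (coeff (dd 0 0)) hg
  have E1 := congrArg (coeff (dd 1 1)) hg
  have E2 := congrArg (coeff (dd 2 2)) hg
  have E3 := congrArg (coeff (dd 3 3)) hg
  have E4 := congrArg (coeff (dd 4 4)) hg
  have E5 := congrArg (coeff (dd 5 5)) hg
  have E6 := congrArg (coeff (dd 0 1)) hg
  have E7 := congrArg (coeff (dd 1 2)) hg
  have E8 := congrArg (coeff (dd 2 3)) hg
  have E9 := congrArg (coeff (dd 3 4)) hg
  have E10 := congrArg (coeff (dd 4 5)) hg
  have E11 := congrArg (coeff (dd 5 0)) hg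
  have E12 := congrArg (coeff (dd 0 2)) hg
  have E13 := congrArg (coeff (dd 1 3)) hg
  have E14 := congrArg (coeff (dd 2 4)) hg
  have E15 := congrArg (coeff (dd 3 5)) hg
  have E16 := congrArg (coeff (dd 4 0)) hg
  have E17 := congrArg (coeff (dd 5 1)) hg
  have E18 := congrArg (coeff (dd 0 3)) hg
  have E19 := congrArg (coeff (dd 1 4)) hg
  have E20 := congrArg (coeff (dd 2 5)) hg
  simp only [coeff_add, coeff_sub, coeff_smul, coeff_XX, coeff_XX2, coeff_zero,
    smul_eq_mul] at E0 E1 E2 E3 E4 E5 E6 E7 E8 E9 E10 E11 E12 E13 E14 E15 E16 E17 E18 E19 E20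
  simp only [dd_eq_iff, Fin.reduceEq, eq_self_iff_true, and_true, true_and, and_false,
    false_and, or_true, true_or, or_false, false_or, reduceIte] at E0 E1 E2 E3 E4 E5 E6 E7 E8 E9 E10 E11 E12 E13 E14 E15 E16 E17 E18 E19 E20
  have Z0 : g (0, 0) = 0 := by linear_combination (E0 + E3) / 2
  have Z1 : g (1, 0) = 0 := by linear_combination (E0 - E3) / 2
  have Z2 : g (2, 0) = 0 := by linear_combination (E6 + E9) / 2
  have Z3 : g (3, 0) = 0 := by linear_combination (E6 - E9) / 2
  have Z4 : g (4, 0) = 0 := by linear_combination (E12 + E15) / 2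
  have Z5 : g (5, 0) = 0 := by linear_combination (E12 - E15) / 2
  have Z6 : g (6, 0) = 0 := by linear_combination E18
  have Z7 : g (0, 1) = 0 := by linear_combination (E1 + E4) / 2
  have Z8 : g (1, 1) = 0 := by linear_combination (E1 - E4) / 2
  have Z9 : g (2, 1) = 0 := by linear_combination (E7 + E10) / 2
  have Z10 : g (3, 1) = 0 := by linear_combination (E7 - E10) / 2
  have Z11 : g (4, 1) = 0 := by linear_combination (E13 + E16) / 2
  have Z12 : g (5, 1) = 0 := by linear_combination (E13 - E16) / 2
  have Z13 : g (6, 1) = 0 := by linear_combination E19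
  have Z14 : g (0, 2) = 0 := by linear_combination (E2 + E5) / 2
  have Z15 : g (1, 2) = 0 := by linear_combination (E2 - E5) / 2
  have Z16 : g (2, 2) = 0 := by linear_combination (E8 + E11) / 2
  have Z17 : g (3, 2) = 0 := by linear_combination (E8 - E11) / 2
  have Z18 : g (4, 2) = 0 := by linear_combination (E14 + E17) / 2
  have Z19 : g (5, 2) = 0 := by linear_combination (E14 - E17) / 2
  have Z20 : g (6, 2) = 0 := by linear_combination E20
  rintro ⟨a, b⟩
  fin_cases a <;> fin_cases b <;> assumption

private lemma himg (j : Fin 7) :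
    Set.range (bb j) = (fun q : Fin 7 × Fin 3 => bb q.1 q.2) '' {q | q.1 = j} := by
  ext v
  constructor
  · rintro ⟨k, rfl⟩; exact ⟨(j, k), rfl, rfl⟩
  · rintro ⟨⟨j', k⟩, hj, rfl⟩
    simp only [Set.mem_setOf_eq] at hj
    subst hj
    exact ⟨k, rfl⟩

private lemma hindep : iSupIndep Vfam := by
  rw [iSupIndep_def]
  intro i
  simp only [hVfam_eq, himg]
  rw [show (⨆ j, ⨆ (_ : j ≠ i), Submodule.span ℂ
        ((fun q : Fin 7 × Fin 3 => bb q.1 q.2) '' {q | q.1 = j}))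
      = Submodule.span ℂ ((fun q : Fin 7 × Fin 3 => bb q.1 q.2) ''
        (⋃ j, ⋃ (_ : j ≠ i), {q | q.1 = j})) by
    rw [Set.image_iUnion₂, Submodule.span_iUnion₂]]
  refine hli.disjoint_span_image ?_
  rw [Set.disjoint_left]
  rintro ⟨j', k⟩ hq hq'
  simp only [Set.mem_setOf_eq] at hq
  simp only [Set.mem_iUnion, Set.mem_setOf_eq] at hq'
  obtain ⟨j, hji, rfl⟩ := hq'
  exact hji hq

private lemma hmem_le (k : Fin 7) : Vfam k ≤ ⨆ n, Vfam n := le_iSup Vfam k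

private lemma Vfam_eq_0 : Vfam 0 = V0p := rfl
private lemma Vfam_eq_1 : Vfam 1 = V0m := rfl
private lemma Vfam_eq_2 : Vfam 2 = V1p := rfl
private lemma Vfam_eq_3 : Vfam 3 = V1m := rfl
private lemma Vfam_eq_4 : Vfam 4 = V2p := rfl
private lemma Vfam_eq_5 : Vfam 5 = V2m := rfl
private lemma Vfam_eq_6 : Vfam 6 = V3 := rfl

private lemma XXmem0 : (X 0 * X 0 : R6) ∈ ⨆ n, Vfam n := by
  have key : (2 : ℂ) • (X 0 * X 0 : R6) = (X 0 ^ 2 + X 3 ^ 2) + (X 0 ^ 2 - X 3 ^ 2) := by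
    rw [two_smul]; ring
  have h2 : (X 0 * X 0 : R6) = (2⁻¹ : ℂ) • ((2 : ℂ) • (X 0 * X 0 : R6)) := by
    rw [smul_smul]; norm_num
  rw [h2, key]
  refine Submodule.smul_mem _ _ (Submodule.add_mem _ ?_ ?_)
  · exact hmem_le 0 (by rw [Vfam_eq_0, V0p]; exact Submodule.subset_span (Set.mem_insert _ _))
  · exact hmem_le 1 (by rw [Vfam_eq_1, V0m]; exact Submodule.subset_span (Set.mem_insert _ _))

private lemma XXmem1 : (X 1 * X 1 : R6) ∈ ⨆ n, Vfam n := by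
  have key : (2 : ℂ) • (X 1 * X 1 : R6) = (X 1 ^ 2 + X 4 ^ 2) + (X 1 ^ 2 - X 4 ^ 2) := by
    rw [two_smul]; ring
  have h2 : (X 1 * X 1 : R6) = (2⁻¹ : ℂ) • ((2 : ℂ) • (X 1 * X 1 : R6)) := by
    rw [smul_smul]; norm_num
  rw [h2, key]
  refine Submodule.smul_mem _ _ (Submodule.add_mem _ ?_ ?_)
  · exact hmem_le 0 (by rw [Vfam_eq_0, V0p]; exact Submodule.subset_span (Set.mem_insert_of_mem _ (Set.mem_insert _ _)))
  · exact hmem_le 1 (by rw [Vfam_eq_1, V0m]; exact Submodule.subset_span (Set.mem_insert_of_mem _ (Set.mem_insert _ _)))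

private lemma XXmem2 : (X 2 * X 2 : R6) ∈ ⨆ n, Vfam n := by
  have key : (2 : ℂ) • (X 2 * X 2 : R6) = (X 2 ^ 2 + X 5 ^ 2) + (X 2 ^ 2 - X 5 ^ 2) := by
    rw [two_smul]; ring
  have h2 : (X 2 * X 2 : R6) = (2⁻¹ : ℂ) • ((2 : ℂ) • (X 2 * X 2 : R6)) := by
    rw [smul_smul]; norm_num
  rw [h2, key]
  refine Submodule.smul_mem _ _ (Submodule.add_mem _ ?_ ?_)
  · exact hmem_le 0 (by rw [Vfam_eq_0, V0p]; exact Submodule.subset_span (Set.mem_insert_of_mem _ (Set.mem_insert_of_mem _ rfl)))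
  · exact hmem_le 1 (by rw [Vfam_eq_1, V0m]; exact Submodule.subset_span (Set.mem_insert_of_mem _ (Set.mem_insert_of_mem _ rfl)))

private lemma XXmem3 : (X 3 * X 3 : R6) ∈ ⨆ n, Vfam n := by
  have key : (2 : ℂ) • (X 3 * X 3 : R6) = (X 0 ^ 2 + X 3 ^ 2) - (X 0 ^ 2 - X 3 ^ 2) := by
    rw [two_smul]; ring
  have h2 : (X 3 * X 3 : R6) = (2⁻¹ : ℂ) • ((2 : ℂ) • (X 3 * X 3 : R6)) := by
    rw [smul_smul]; norm_num
  rw [h2, key]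
  refine Submodule.smul_mem _ _ (Submodule.sub_mem _ ?_ ?_)
  · exact hmem_le 0 (by rw [Vfam_eq_0, V0p]; exact Submodule.subset_span (Set.mem_insert _ _))
  · exact hmem_le 1 (by rw [Vfam_eq_1, V0m]; exact Submodule.subset_span (Set.mem_insert _ _))

private lemma XXmem4 : (X 4 * X 4 : R6) ∈ ⨆ n, Vfam n := by
  have key : (2 : ℂ) • (X 4 * X 4 : R6) = (X 1 ^ 2 + X 4 ^ 2) - (X 1 ^ 2 - X 4 ^ 2) := by
    rw [two_smul]; ring
  have h2 : (X 4 * X 4 : R6) = (2⁻¹ : ℂ) • ((2 : ℂ) • (X 4 * X 4 : R6)) := by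
    rw [smul_smul]; norm_num
  rw [h2, key]
  refine Submodule.smul_mem _ _ (Submodule.sub_mem _ ?_ ?_)
  · exact hmem_le 0 (by rw [Vfam_eq_0, V0p]; exact Submodule.subset_span (Set.mem_insert_of_mem _ (Set.mem_insert _ _)))
  · exact hmem_le 1 (by rw [Vfam_eq_1, V0m]; exact Submodule.subset_span (Set.mem_insert_of_mem _ (Set.mem_insert _ _)))

private lemma XXmem5 : (X 5 * X 5 : R6) ∈ ⨆ n, Vfam n := by
  have key : (2 : ℂ) • (X 5 * X 5 : R6) = (X 2 ^ 2 + X 5 ^ 2) - (X 2 ^ 2 - X 5 ^ 2) := by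
    rw [two_smul]; ring
  have h2 : (X 5 * X 5 : R6) = (2⁻¹ : ℂ) • ((2 : ℂ) • (X 5 * X 5 : R6)) := by
    rw [smul_smul]; norm_num
  rw [h2, key]
  refine Submodule.smul_mem _ _ (Submodule.sub_mem _ ?_ ?_)
  · exact hmem_le 0 (by rw [Vfam_eq_0, V0p]; exact Submodule.subset_span (Set.mem_insert_of_mem _ (Set.mem_insert_of_mem _ rfl)))
  · exact hmem_le 1 (by rw [Vfam_eq_1, V0m]; exact Submodule.subset_span (Set.mem_insert_of_mem _ (Set.mem_insert_of_mem _ rfl)))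

private lemma XXmem6 : (X 0 * X 1 : R6) ∈ ⨆ n, Vfam n := by
  have key : (2 : ℂ) • (X 0 * X 1 : R6) = (X 0 * X 1 + X 3 * X 4) + (X 0 * X 1 - X 3 * X 4) := by
    rw [two_smul]; ring
  have h2 : (X 0 * X 1 : R6) = (2⁻¹ : ℂ) • ((2 : ℂ) • (X 0 * X 1 : R6)) := by
    rw [smul_smul]; norm_num
  rw [h2, key]
  refine Submodule.smul_mem _ _ (Submodule.add_mem _ ?_ ?_)
  · exact hmem_le 2 (by rw [Vfam_eq_2, V1p]; exact Submodule.subset_span (Set.mem_insert _ _))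
  · exact hmem_le 3 (by rw [Vfam_eq_3, V1m]; exact Submodule.subset_span (Set.mem_insert _ _))

private lemma XXmem7 : (X 1 * X 2 : R6) ∈ ⨆ n, Vfam n := by
  have key : (2 : ℂ) • (X 1 * X 2 : R6) = (X 1 * X 2 + X 4 * X 5) + (X 1 * X 2 - X 4 * X 5) := by
    rw [two_smul]; ring
  have h2 : (X 1 * X 2 : R6) = (2⁻¹ : ℂ) • ((2 : ℂ) • (X 1 * X 2 : R6)) := by
    rw [smul_smul]; norm_num
  rw [h2, key]
  refine Submodule.smul_mem _ _ (Submodule.add_mem _ ?_ ?_)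
  · exact hmem_le 2 (by rw [Vfam_eq_2, V1p]; exact Submodule.subset_span (Set.mem_insert_of_mem _ (Set.mem_insert _ _)))
  · exact hmem_le 3 (by rw [Vfam_eq_3, V1m]; exact Submodule.subset_span (Set.mem_insert_of_mem _ (Set.mem_insert _ _)))

private lemma XXmem8 : (X 2 * X 3 : R6) ∈ ⨆ n, Vfam n := by
  have key : (2 : ℂ) • (X 2 * X 3 : R6) = (X 2 * X 3 + X 5 * X 0) + (X 2 * X 3 - X 5 * X 0) := by
    rw [two_smul]; ring
  have h2 : (X 2 * X 3 : R6) = (2⁻¹ : ℂ) • ((2 : ℂ) • (X 2 * X 3 : R6)) := by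
    rw [smul_smul]; norm_num
  rw [h2, key]
  refine Submodule.smul_mem _ _ (Submodule.add_mem _ ?_ ?_)
  · exact hmem_le 2 (by rw [Vfam_eq_2, V1p]; exact Submodule.subset_span (Set.mem_insert_of_mem _ (Set.mem_insert_of_mem _ rfl)))
  · exact hmem_le 3 (by rw [Vfam_eq_3, V1m]; exact Submodule.subset_span (Set.mem_insert_of_mem _ (Set.mem_insert_of_mem _ rfl)))

private lemma XXmem9 : (X 3 * X 4 : R6) ∈ ⨆ n, Vfam n := by
  have key : (2 : ℂ) • (X 3 * X 4 : R6) = (X 0 * X 1 + X 3 * X 4) - (X 0 * X 1 - X 3 * X 4) := by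
    rw [two_smul]; ring
  have h2 : (X 3 * X 4 : R6) = (2⁻¹ : ℂ) • ((2 : ℂ) • (X 3 * X 4 : R6)) := by
    rw [smul_smul]; norm_num
  rw [h2, key]
  refine Submodule.smul_mem _ _ (Submodule.sub_mem _ ?_ ?_)
  · exact hmem_le 2 (by rw [Vfam_eq_2, V1p]; exact Submodule.subset_span (Set.mem_insert _ _))
  · exact hmem_le 3 (by rw [Vfam_eq_3, V1m]; exact Submodule.subset_span (Set.mem_insert _ _))

private lemma XXmem10 : (X 4 * X 5 : R6) ∈ ⨆ n, Vfam n := by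
  have key : (2 : ℂ) • (X 4 * X 5 : R6) = (X 1 * X 2 + X 4 * X 5) - (X 1 * X 2 - X 4 * X 5) := by
    rw [two_smul]; ring
  have h2 : (X 4 * X 5 : R6) = (2⁻¹ : ℂ) • ((2 : ℂ) • (X 4 * X 5 : R6)) := by
    rw [smul_smul]; norm_num
  rw [h2, key]
  refine Submodule.smul_mem _ _ (Submodule.sub_mem _ ?_ ?_)
  · exact hmem_le 2 (by rw [Vfam_eq_2, V1p]; exact Submodule.subset_span (Set.mem_insert_of_mem _ (Set.mem_insert _ _)))
  · exact hmem_le 3 (by rw [Vfam_eq_3, V1m]; exact Submodule.subset_span (Set.mem_insert_of_mem _ (Set.mem_insert _ _)))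

private lemma XXmem11 : (X 5 * X 0 : R6) ∈ ⨆ n, Vfam n := by
  have key : (2 : ℂ) • (X 5 * X 0 : R6) = (X 2 * X 3 + X 5 * X 0) - (X 2 * X 3 - X 5 * X 0) := by
    rw [two_smul]; ring
  have h2 : (X 5 * X 0 : R6) = (2⁻¹ : ℂ) • ((2 : ℂ) • (X 5 * X 0 : R6)) := by
    rw [smul_smul]; norm_num
  rw [h2, key]
  refine Submodule.smul_mem _ _ (Submodule.sub_mem _ ?_ ?_)
  · exact hmem_le 2 (by rw [Vfam_eq_2, V1p]; exact Submodule.subset_span (Set.mem_insert_of_mem _ (Set.mem_insert_of_mem _ rfl)))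
  · exact hmem_le 3 (by rw [Vfam_eq_3, V1m]; exact Submodule.subset_span (Set.mem_insert_of_mem _ (Set.mem_insert_of_mem _ rfl)))

private lemma XXmem12 : (X 0 * X 2 : R6) ∈ ⨆ n, Vfam n := by
  have key : (2 : ℂ) • (X 0 * X 2 : R6) = (X 0 * X 2 + X 3 * X 5) + (X 0 * X 2 - X 3 * X 5) := by
    rw [two_smul]; ring
  have h2 : (X 0 * X 2 : R6) = (2⁻¹ : ℂ) • ((2 : ℂ) • (X 0 * X 2 : R6)) := by
    rw [smul_smul]; norm_num
  rw [h2, key]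
  refine Submodule.smul_mem _ _ (Submodule.add_mem _ ?_ ?_)
  · exact hmem_le 4 (by rw [Vfam_eq_4, V2p]; exact Submodule.subset_span (Set.mem_insert _ _))
  · exact hmem_le 5 (by rw [Vfam_eq_5, V2m]; exact Submodule.subset_span (Set.mem_insert _ _))

private lemma XXmem13 : (X 1 * X 3 : R6) ∈ ⨆ n, Vfam n := by
  have key : (2 : ℂ) • (X 1 * X 3 : R6) = (X 1 * X 3 + X 4 * X 0) + (X 1 * X 3 - X 4 * X 0) := by
    rw [two_smul]; ring
  have h2 : (X 1 * X 3 : R6) = (2⁻¹ : ℂ) • ((2 : ℂ) • (X 1 * X 3 : R6)) := by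
    rw [smul_smul]; norm_num
  rw [h2, key]
  refine Submodule.smul_mem _ _ (Submodule.add_mem _ ?_ ?_)
  · exact hmem_le 4 (by rw [Vfam_eq_4, V2p]; exact Submodule.subset_span (Set.mem_insert_of_mem _ (Set.mem_insert _ _)))
  · exact hmem_le 5 (by rw [Vfam_eq_5, V2m]; exact Submodule.subset_span (Set.mem_insert_of_mem _ (Set.mem_insert _ _)))

private lemma XXmem14 : (X 2 * X 4 : R6) ∈ ⨆ n, Vfam n := by
  have key : (2 : ℂ) • (X 2 * X 4 : R6) = (X 2 * X 4 + X 5 * X 1) + (X 2 * X 4 - X 5 * X 1) := by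
    rw [two_smul]; ring
  have h2 : (X 2 * X 4 : R6) = (2⁻¹ : ℂ) • ((2 : ℂ) • (X 2 * X 4 : R6)) := by
    rw [smul_smul]; norm_num
  rw [h2, key]
  refine Submodule.smul_mem _ _ (Submodule.add_mem _ ?_ ?_)
  · exact hmem_le 4 (by rw [Vfam_eq_4, V2p]; exact Submodule.subset_span (Set.mem_insert_of_mem _ (Set.mem_insert_of_mem _ rfl)))
  · exact hmem_le 5 (by rw [Vfam_eq_5, V2m]; exact Submodule.subset_span (Set.mem_insert_of_mem _ (Set.mem_insert_of_mem _ rfl)))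

private lemma XXmem15 : (X 3 * X 5 : R6) ∈ ⨆ n, Vfam n := by
  have key : (2 : ℂ) • (X 3 * X 5 : R6) = (X 0 * X 2 + X 3 * X 5) - (X 0 * X 2 - X 3 * X 5) := by
    rw [two_smul]; ring
  have h2 : (X 3 * X 5 : R6) = (2⁻¹ : ℂ) • ((2 : ℂ) • (X 3 * X 5 : R6)) := by
    rw [smul_smul]; norm_num
  rw [h2, key]
  refine Submodule.smul_mem _ _ (Submodule.sub_mem _ ?_ ?_)
  · exact hmem_le 4 (by rw [Vfam_eq_4, V2p]; exact Submodule.subset_span (Set.mem_insert _ _))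
  · exact hmem_le 5 (by rw [Vfam_eq_5, V2m]; exact Submodule.subset_span (Set.mem_insert _ _))

private lemma XXmem16 : (X 4 * X 0 : R6) ∈ ⨆ n, Vfam n := by
  have key : (2 : ℂ) • (X 4 * X 0 : R6) = (X 1 * X 3 + X 4 * X 0) - (X 1 * X 3 - X 4 * X 0) := by
    rw [two_smul]; ring
  have h2 : (X 4 * X 0 : R6) = (2⁻¹ : ℂ) • ((2 : ℂ) • (X 4 * X 0 : R6)) := by
    rw [smul_smul]; norm_num
  rw [h2, key]
  refine Submodule.smul_mem _ _ (Submodule.sub_mem _ ?_ ?_)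
  · exact hmem_le 4 (by rw [Vfam_eq_4, V2p]; exact Submodule.subset_span (Set.mem_insert_of_mem _ (Set.mem_insert _ _)))
  · exact hmem_le 5 (by rw [Vfam_eq_5, V2m]; exact Submodule.subset_span (Set.mem_insert_of_mem _ (Set.mem_insert _ _)))

private lemma XXmem17 : (X 5 * X 1 : R6) ∈ ⨆ n, Vfam n := by
  have key : (2 : ℂ) • (X 5 * X 1 : R6) = (X 2 * X 4 + X 5 * X 1) - (X 2 * X 4 - X 5 * X 1) := by
    rw [two_smul]; ring
  have h2 : (X 5 * X 1 : R6) = (2⁻¹ : ℂ) • ((2 : ℂ) • (X 5 * X 1 : R6)) := by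
    rw [smul_smul]; norm_num
  rw [h2, key]
  refine Submodule.smul_mem _ _ (Submodule.sub_mem _ ?_ ?_)
  · exact hmem_le 4 (by rw [Vfam_eq_4, V2p]; exact Submodule.subset_span (Set.mem_insert_of_mem _ (Set.mem_insert_of_mem _ rfl)))
  · exact hmem_le 5 (by rw [Vfam_eq_5, V2m]; exact Submodule.subset_span (Set.mem_insert_of_mem _ (Set.mem_insert_of_mem _ rfl)))

private lemma XXmem18 : (X 0 * X 3 : R6) ∈ ⨆ n, Vfam n := by
  refine hmem_le 6 ?_
  rw [Vfam_eq_6, V3]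
  exact Submodule.subset_span (Set.mem_insert _ _)

private lemma XXmem19 : (X 1 * X 4 : R6) ∈ ⨆ n, Vfam n := by
  refine hmem_le 6 ?_
  rw [Vfam_eq_6, V3]
  exact Submodule.subset_span (Set.mem_insert_of_mem _ (Set.mem_insert _ _))

private lemma XXmem20 : (X 2 * X 5 : R6) ∈ ⨆ n, Vfam n := by
  refine hmem_le 6 ?_
  rw [Vfam_eq_6, V3]
  exact Submodule.subset_span (Set.mem_insert_of_mem _ (Set.mem_insert_of_mem _ rfl))

private lemma XXmemR6 : (X 1 * X 0 : R6) ∈ ⨆ n, Vfam n := by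
  rw [show (X 1 * X 0 : R6) = X 0 * X 1 from mul_comm _ _]
  exact XXmem6

private lemma XXmemR7 : (X 2 * X 1 : R6) ∈ ⨆ n, Vfam n := by
  rw [show (X 2 * X 1 : R6) = X 1 * X 2 from mul_comm _ _]
  exact XXmem7

private lemma XXmemR8 : (X 3 * X 2 : R6) ∈ ⨆ n, Vfam n := by
  rw [show (X 3 * X 2 : R6) = X 2 * X 3 from mul_comm _ _]
  exact XXmem8

private lemma XXmemR9 : (X 4 * X 3 : R6) ∈ ⨆ n, Vfam n := by
  rw [show (X 4 * X 3 : R6) = X 3 * X 4 from mul_comm _ _]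
  exact XXmem9

private lemma XXmemR10 : (X 5 * X 4 : R6) ∈ ⨆ n, Vfam n := by
  rw [show (X 5 * X 4 : R6) = X 4 * X 5 from mul_comm _ _]
  exact XXmem10

private lemma XXmemR11 : (X 0 * X 5 : R6) ∈ ⨆ n, Vfam n := by
  rw [show (X 0 * X 5 : R6) = X 5 * X 0 from mul_comm _ _]
  exact XXmem11

private lemma XXmemR12 : (X 2 * X 0 : R6) ∈ ⨆ n, Vfam n := by
  rw [show (X 2 * X 0 : R6) = X 0 * X 2 from mul_comm _ _]
  exact XXmem12

private lemma XXmemR13 : (X 3 * X 1 : R6) ∈ ⨆ n, Vfam n := by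
  rw [show (X 3 * X 1 : R6) = X 1 * X 3 from mul_comm _ _]
  exact XXmem13

private lemma XXmemR14 : (X 4 * X 2 : R6) ∈ ⨆ n, Vfam n := by
  rw [show (X 4 * X 2 : R6) = X 2 * X 4 from mul_comm _ _]
  exact XXmem14

private lemma XXmemR15 : (X 5 * X 3 : R6) ∈ ⨆ n, Vfam n := by
  rw [show (X 5 * X 3 : R6) = X 3 * X 5 from mul_comm _ _]
  exact XXmem15

private lemma XXmemR16 : (X 0 * X 4 : R6) ∈ ⨆ n, Vfam n := by
  rw [show (X 0 * X 4 : R6) = X 4 * X 0 from mul_comm _ _]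
  exact XXmem16

private lemma XXmemR17 : (X 1 * X 5 : R6) ∈ ⨆ n, Vfam n := by
  rw [show (X 1 * X 5 : R6) = X 5 * X 1 from mul_comm _ _]
  exact XXmem17

private lemma XXmemR18 : (X 3 * X 0 : R6) ∈ ⨆ n, Vfam n := by
  rw [show (X 3 * X 0 : R6) = X 0 * X 3 from mul_comm _ _]
  exact XXmem18

private lemma XXmemR19 : (X 4 * X 1 : R6) ∈ ⨆ n, Vfam n := by
  rw [show (X 4 * X 1 : R6) = X 1 * X 4 from mul_comm _ _]
  exact XXmem19

private lemma XXmemR20 : (X 5 * X 2 : R6) ∈ ⨆ n, Vfam n := by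
  rw [show (X 5 * X 2 : R6) = X 2 * X 5 from mul_comm _ _]
  exact XXmem20

private lemma XXall (i j : Fin 6) : (X i * X j : R6) ∈ ⨆ n, Vfam n := by
  fin_cases i <;> fin_cases j
  exacts [XXmem0, XXmem6, XXmem12, XXmem18, XXmemR16, XXmemR11, XXmemR6, XXmem1, XXmem7, XXmem13, XXmem19, XXmemR17, XXmemR12, XXmemR7, XXmem2, XXmem8, XXmem14, XXmem20, XXmemR18, XXmemR13, XXmemR8, XXmem3, XXmem9, XXmem15, XXmem16, XXmemR19, XXmemR14, XXmemR9, XXmem4, XXmem10, XXmem11, XXmem17, XXmemR20, XXmemR15, XXmemR10, XXmem5]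

private lemma mono_mem (d : Fin 6 →₀ ℕ) (hd : ∑ x : Fin 6, d x = 2) (c : ℂ) :
    (monomial d c : R6) ∈ ⨆ n, Vfam n := by
  have hmono : ∀ (i j : Fin 6), (monomial (dd i j) c : R6) = c • (X i * X j : R6) := by
    intro i j
    rw [smul_eq_C_mul, X, X, monomial_mul, C_mul_monomial, one_mul, mul_one, dd]
  have hcard : Multiset.card (Finsupp.toMultiset d) = 2 := by
    rw [Finsupp.card_toMultiset, Finsupp.sum_fintype]
    · simpa using hd
    · intro _; rfl
  obtain ⟨i, j, hij⟩ := Multiset.card_eq_two.mp hcard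
  have hdd : d = dd i j := by
    rw [← Finsupp.toMultiset_toFinsupp d, hij,
      show ({i, j} : Multiset (Fin 6)) = {i} + {j} from (Multiset.singleton_add i {j}).symm,
      map_add, Multiset.toFinsupp_singleton, Multiset.toFinsupp_singleton, dd]
  rw [hdd, hmono]
  exact Submodule.smul_mem _ _ (XXall i j)

private lemma hXXhom (a b : Fin 6) : (X a * X b : R6).IsHomogeneous 2 := by
  simpa using (isHomogeneous_X ℂ a).mul (isHomogeneous_X ℂ b)

private lemma hX2hom (a : Fin 6) : (X a ^ 2 : R6).IsHomogeneous 2 := by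
  rw [pow_two]; exact hXXhom a a

private lemma hbb_0_0 : (bb 0 0).IsHomogeneous 2 := by
  rw [bb_0_0]; exact (hX2hom _).add (hX2hom _)

private lemma hbb_0_1 : (bb 0 1).IsHomogeneous 2 := by
  rw [bb_0_1]; exact (hX2hom _).add (hX2hom _)

private lemma hbb_0_2 : (bb 0 2).IsHomogeneous 2 := by
  rw [bb_0_2]; exact (hX2hom _).add (hX2hom _)

private lemma hbb_1_0 : (bb 1 0).IsHomogeneous 2 := by
  rw [bb_1_0]; exact (hX2hom _).sub (hX2hom _)

private lemma hbb_1_1 : (bb 1 1).IsHomogeneous 2 := by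
  rw [bb_1_1]; exact (hX2hom _).sub (hX2hom _)

private lemma hbb_1_2 : (bb 1 2).IsHomogeneous 2 := by
  rw [bb_1_2]; exact (hX2hom _).sub (hX2hom _)

private lemma hbb_2_0 : (bb 2 0).IsHomogeneous 2 := by
  rw [bb_2_0]; exact (hXXhom _ _).add (hXXhom _ _)

private lemma hbb_2_1 : (bb 2 1).IsHomogeneous 2 := by
  rw [bb_2_1]; exact (hXXhom _ _).add (hXXhom _ _)

private lemma hbb_2_2 : (bb 2 2).IsHomogeneous 2 := by
  rw [bb_2_2]; exact (hXXhom _ _).add (hXXhom _ _)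

private lemma hbb_3_0 : (bb 3 0).IsHomogeneous 2 := by
  rw [bb_3_0]; exact (hXXhom _ _).sub (hXXhom _ _)

private lemma hbb_3_1 : (bb 3 1).IsHomogeneous 2 := by
  rw [bb_3_1]; exact (hXXhom _ _).sub (hXXhom _ _)

private lemma hbb_3_2 : (bb 3 2).IsHomogeneous 2 := by
  rw [bb_3_2]; exact (hXXhom _ _).sub (hXXhom _ _)

private lemma hbb_4_0 : (bb 4 0).IsHomogeneous 2 := by
  rw [bb_4_0]; exact (hXXhom _ _).add (hXXhom _ _)

private lemma hbb_4_1 : (bb 4 1).IsHomogeneous 2 := by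
  rw [bb_4_1]; exact (hXXhom _ _).add (hXXhom _ _)

private lemma hbb_4_2 : (bb 4 2).IsHomogeneous 2 := by
  rw [bb_4_2]; exact (hXXhom _ _).add (hXXhom _ _)

private lemma hbb_5_0 : (bb 5 0).IsHomogeneous 2 := by
  rw [bb_5_0]; exact (hXXhom _ _).sub (hXXhom _ _)

private lemma hbb_5_1 : (bb 5 1).IsHomogeneous 2 := by
  rw [bb_5_1]; exact (hXXhom _ _).sub (hXXhom _ _)

private lemma hbb_5_2 : (bb 5 2).IsHomogeneous 2 := by
  rw [bb_5_2]; exact (hXXhom _ _).sub (hXXhom _ _)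

private lemma hbb_6_0 : (bb 6 0).IsHomogeneous 2 := by
  rw [bb_6_0]; exact hXXhom _ _

private lemma hbb_6_1 : (bb 6 1).IsHomogeneous 2 := by
  rw [bb_6_1]; exact hXXhom _ _

private lemma hbb_6_2 : (bb 6 2).IsHomogeneous 2 := by
  rw [bb_6_2]; exact hXXhom _ _

private lemma hbbhom : ∀ (i : Fin 7) (k : Fin 3), (bb i k).IsHomogeneous 2 := by
  intro i k
  fin_cases i <;> fin_cases k
  exacts [hbb_0_0, hbb_0_1, hbb_0_2, hbb_1_0, hbb_1_1, hbb_1_2, hbb_2_0, hbb_2_1, hbb_2_2, hbb_3_0, hbb_3_1, hbb_3_2, hbb_4_0, hbb_4_1, hbb_4_2, hbb_5_0, hbb_5_1, hbb_5_2, hbb_6_0, hbb_6_1, hbb_6_2]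


private lemma hsup : (⨆ i, Vfam i) = P2 := by
  apply le_antisymm
  · refine iSup_le fun i => ?_
    rw [hVfam_eq]
    refine Submodule.span_le.mpr ?_
    rintro _ ⟨k, rfl⟩
    rw [SetLike.mem_coe, P2, mem_homogeneousSubmodule]
    exact hbbhom i k
  · intro p hp
    rw [P2, mem_homogeneousSubmodule] at hp
    rw [← support_sum_monomial_coeff p]
    refine Submodule.sum_mem _ fun d hdsupp => ?_
    have hw := hp (mem_support_iff.mp hdsupp)
    have hdeg : ∑ x : Fin 6, d x = 2 := by
      rw [show (Finsupp.weight 1 : (Fin 6 →₀ ℕ) →+ ℕ) = Finsupp.weight (fun _ => 1) from rfl,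
        ← Finsupp.degree_eq_weight_one] at hw
      rw [← hw, Finsupp.degree]
      exact (Finset.sum_subset (Finset.subset_univ _)
        (fun x _ hx => Finsupp.notMem_support_iff.mp hx)).symm
    exact mono_mem d hdeg _

private lemma hC6' : ε ^ 6 = 1 := by
  rw [ε, ← Complex.exp_nat_mul]
  rw [show ((6 : ℕ) : ℂ) * (2 * Real.pi * Complex.I / 6) = 2 * Real.pi * Complex.I by
    push_cast; ring]
  exact Complex.exp_two_pi_mul_I

private lemma hC6 : (C ε : R6) ^ 6 = 1 := by
  rw [← map_pow, hC6', map_one]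

private lemma hv0 : ((0 : Fin 6) : ℕ) = 0 := rfl
private lemma hv1 : ((1 : Fin 6) : ℕ) = 1 := rfl
private lemma hv2 : ((2 : Fin 6) : ℕ) = 2 := rfl
private lemma hv3 : ((3 : Fin 6) : ℕ) = 3 := rfl
private lemma hv4 : ((4 : Fin 6) : ℕ) = 4 := rfl
private lemma hv5 : ((5 : Fin 6) : ℕ) = 5 := rfl

private lemma hSh0 : Submodule.map Sh.toLinearMap V0p ≤ V0p := by
  rw [V0p, Submodule.map_span]
  refine Submodule.span_le.mpr ?_
  rintro _ ⟨v, hv, rfl⟩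
  simp only [Set.mem_insert_iff, Set.mem_singleton_iff] at hv
  rw [SetLike.mem_coe]
  rcases hv with rfl | rfl | rfl
  · have himg : Sh.toLinearMap (X 0 ^ 2 + X 3 ^ 2 : R6) = (X 1 ^ 2 + X 4 ^ 2) := by
      simp [Sh]
      try ring
    rw [himg]
    exact Submodule.subset_span (Set.mem_insert_of_mem _ (Set.mem_insert _ _))
  · have himg : Sh.toLinearMap (X 1 ^ 2 + X 4 ^ 2 : R6) = (X 2 ^ 2 + X 5 ^ 2) := by
      simp [Sh]
      try ring
    rw [himg]
    exact Submodule.subset_span (Set.mem_insert_of_mem _ (Set.mem_insert_of_mem _ rfl))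
  · have himg : Sh.toLinearMap (X 2 ^ 2 + X 5 ^ 2 : R6) = (X 0 ^ 2 + X 3 ^ 2) := by
      simp [Sh]
      try ring
    rw [himg]
    exact Submodule.subset_span (Set.mem_insert _ _)

private lemma hSh1 : Submodule.map Sh.toLinearMap V0m ≤ V0m := by
  rw [V0m, Submodule.map_span]
  refine Submodule.span_le.mpr ?_
  rintro _ ⟨v, hv, rfl⟩
  simp only [Set.mem_insert_iff, Set.mem_singleton_iff] at hv
  rw [SetLike.mem_coe]
  rcases hv with rfl | rfl | rfl
  · have himg : Sh.toLinearMap (X 0 ^ 2 - X 3 ^ 2 : R6) = (X 1 ^ 2 - X 4 ^ 2) := by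
      simp [Sh]
      try ring
    rw [himg]
    exact Submodule.subset_span (Set.mem_insert_of_mem _ (Set.mem_insert _ _))
  · have himg : Sh.toLinearMap (X 1 ^ 2 - X 4 ^ 2 : R6) = (X 2 ^ 2 - X 5 ^ 2) := by
      simp [Sh]
      try ring
    rw [himg]
    exact Submodule.subset_span (Set.mem_insert_of_mem _ (Set.mem_insert_of_mem _ rfl))
  · have himg : Sh.toLinearMap (X 2 ^ 2 - X 5 ^ 2 : R6) = -(X 0 ^ 2 - X 3 ^ 2) := by
      simp [Sh]
      try ring
    rw [himg]
    exact Submodule.neg_mem _ (Submodule.subset_span (Set.mem_insert _ _))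

private lemma hSh2 : Submodule.map Sh.toLinearMap V1p ≤ V1p := by
  rw [V1p, Submodule.map_span]
  refine Submodule.span_le.mpr ?_
  rintro _ ⟨v, hv, rfl⟩
  simp only [Set.mem_insert_iff, Set.mem_singleton_iff] at hv
  rw [SetLike.mem_coe]
  rcases hv with rfl | rfl | rfl
  · have himg : Sh.toLinearMap (X 0 * X 1 + X 3 * X 4 : R6) = (X 1 * X 2 + X 4 * X 5) := by
      simp [Sh]
      try ring
    rw [himg]
    exact Submodule.subset_span (Set.mem_insert_of_mem _ (Set.mem_insert _ _))
  · have himg : Sh.toLinearMap (X 1 * X 2 + X 4 * X 5 : R6) = (X 2 * X 3 + X 5 * X 0) := by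
      simp [Sh]
      try ring
    rw [himg]
    exact Submodule.subset_span (Set.mem_insert_of_mem _ (Set.mem_insert_of_mem _ rfl))
  · have himg : Sh.toLinearMap (X 2 * X 3 + X 5 * X 0 : R6) = (X 0 * X 1 + X 3 * X 4) := by
      simp [Sh]
      try ring
    rw [himg]
    exact Submodule.subset_span (Set.mem_insert _ _)

private lemma hSh3 : Submodule.map Sh.toLinearMap V1m ≤ V1m := by
  rw [V1m, Submodule.map_span]
  refine Submodule.span_le.mpr ?_
  rintro _ ⟨v, hv, rfl⟩
  simp only [Set.mem_insert_iff, Set.mem_singleton_iff] at hv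
  rw [SetLike.mem_coe]
  rcases hv with rfl | rfl | rfl
  · have himg : Sh.toLinearMap (X 0 * X 1 - X 3 * X 4 : R6) = (X 1 * X 2 - X 4 * X 5) := by
      simp [Sh]
      try ring
    rw [himg]
    exact Submodule.subset_span (Set.mem_insert_of_mem _ (Set.mem_insert _ _))
  · have himg : Sh.toLinearMap (X 1 * X 2 - X 4 * X 5 : R6) = (X 2 * X 3 - X 5 * X 0) := by
      simp [Sh]
      try ring
    rw [himg]
    exact Submodule.subset_span (Set.mem_insert_of_mem _ (Set.mem_insert_of_mem _ rfl))
  · have himg : Sh.toLinearMap (X 2 * X 3 - X 5 * X 0 : R6) = -(X 0 * X 1 - X 3 * X 4) := by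
      simp [Sh]
      try ring
    rw [himg]
    exact Submodule.neg_mem _ (Submodule.subset_span (Set.mem_insert _ _))

private lemma hSh4 : Submodule.map Sh.toLinearMap V2p ≤ V2p := by
  rw [V2p, Submodule.map_span]
  refine Submodule.span_le.mpr ?_
  rintro _ ⟨v, hv, rfl⟩
  simp only [Set.mem_insert_iff, Set.mem_singleton_iff] at hv
  rw [SetLike.mem_coe]
  rcases hv with rfl | rfl | rfl
  · have himg : Sh.toLinearMap (X 0 * X 2 + X 3 * X 5 : R6) = (X 1 * X 3 + X 4 * X 0) := by
      simp [Sh]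
      try ring
    rw [himg]
    exact Submodule.subset_span (Set.mem_insert_of_mem _ (Set.mem_insert _ _))
  · have himg : Sh.toLinearMap (X 1 * X 3 + X 4 * X 0 : R6) = (X 2 * X 4 + X 5 * X 1) := by
      simp [Sh]
      try ring
    rw [himg]
    exact Submodule.subset_span (Set.mem_insert_of_mem _ (Set.mem_insert_of_mem _ rfl))
  · have himg : Sh.toLinearMap (X 2 * X 4 + X 5 * X 1 : R6) = (X 0 * X 2 + X 3 * X 5) := by
      simp [Sh]
      try ring
    rw [himg]
    exact Submodule.subset_span (Set.mem_insert _ _)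

private lemma hSh5 : Submodule.map Sh.toLinearMap V2m ≤ V2m := by
  rw [V2m, Submodule.map_span]
  refine Submodule.span_le.mpr ?_
  rintro _ ⟨v, hv, rfl⟩
  simp only [Set.mem_insert_iff, Set.mem_singleton_iff] at hv
  rw [SetLike.mem_coe]
  rcases hv with rfl | rfl | rfl
  · have himg : Sh.toLinearMap (X 0 * X 2 - X 3 * X 5 : R6) = (X 1 * X 3 - X 4 * X 0) := by
      simp [Sh]
      try ring
    rw [himg]
    exact Submodule.subset_span (Set.mem_insert_of_mem _ (Set.mem_insert _ _))
  · have himg : Sh.toLinearMap (X 1 * X 3 - X 4 * X 0 : R6) = (X 2 * X 4 - X 5 * X 1) := by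
      simp [Sh]
      try ring
    rw [himg]
    exact Submodule.subset_span (Set.mem_insert_of_mem _ (Set.mem_insert_of_mem _ rfl))
  · have himg : Sh.toLinearMap (X 2 * X 4 - X 5 * X 1 : R6) = -(X 0 * X 2 - X 3 * X 5) := by
      simp [Sh]
      try ring
    rw [himg]
    exact Submodule.neg_mem _ (Submodule.subset_span (Set.mem_insert _ _))

private lemma hSh6 : Submodule.map Sh.toLinearMap V3 ≤ V3 := by
  rw [V3, Submodule.map_span]
  refine Submodule.span_le.mpr ?_
  rintro _ ⟨v, hv, rfl⟩
  simp only [Set.mem_insert_iff, Set.mem_singleton_iff] at hv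
  rw [SetLike.mem_coe]
  rcases hv with rfl | rfl | rfl
  · have himg : Sh.toLinearMap (X 0 * X 3 : R6) = (X 1 * X 4) := by
      simp [Sh]
      try ring
    rw [himg]
    exact Submodule.subset_span (Set.mem_insert_of_mem _ (Set.mem_insert _ _))
  · have himg : Sh.toLinearMap (X 1 * X 4 : R6) = (X 2 * X 5) := by
      simp [Sh]
      try ring
    rw [himg]
    exact Submodule.subset_span (Set.mem_insert_of_mem _ (Set.mem_insert_of_mem _ rfl))
  · have himg : Sh.toLinearMap (X 2 * X 5 : R6) = (X 0 * X 3) := by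
      simp [Sh]
      try ring
    rw [himg]
    exact Submodule.subset_span (Set.mem_insert _ _)

private lemma hTw0 : Submodule.map Tw.toLinearMap V0p ≤ V0p := by
  rw [V0p, Submodule.map_span]
  refine Submodule.span_le.mpr ?_
  rintro _ ⟨v, hv, rfl⟩
  simp only [Set.mem_insert_iff, Set.mem_singleton_iff] at hv
  rw [SetLike.mem_coe]
  rcases hv with rfl | rfl | rfl
  · have himg : Tw.toLinearMap (X 0 ^ 2 + X 3 ^ 2 : R6) = C ((1 : ℂ)) * (X 0 ^ 2 + X 3 ^ 2) := by
      simp only [AlgHom.toLinearMap_apply, Tw, aeval_X, map_add, map_sub, map_mul, map_pow,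
        map_one, hv0, hv1, hv2, hv3, hv4, hv5, pow_zero, one_mul]
      linear_combination ((X 3 ^ 2) : R6) * hC6
    rw [himg, ← smul_eq_C_mul]
    exact Submodule.smul_mem _ _ (Submodule.subset_span (Set.mem_insert _ _))
  · have himg : Tw.toLinearMap (X 1 ^ 2 + X 4 ^ 2 : R6) = C (ε ^ 2) * (X 1 ^ 2 + X 4 ^ 2) := by
      simp only [AlgHom.toLinearMap_apply, Tw, aeval_X, map_add, map_sub, map_mul, map_pow,
        map_one, hv0, hv1, hv2, hv3, hv4, hv5, pow_zero, one_mul]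
      linear_combination (C ε ^ 2 * (X 4 ^ 2) : R6) * hC6
    rw [himg, ← smul_eq_C_mul]
    exact Submodule.smul_mem _ _ (Submodule.subset_span (Set.mem_insert_of_mem _ (Set.mem_insert _ _)))
  · have himg : Tw.toLinearMap (X 2 ^ 2 + X 5 ^ 2 : R6) = C (ε ^ 4) * (X 2 ^ 2 + X 5 ^ 2) := by
      simp only [AlgHom.toLinearMap_apply, Tw, aeval_X, map_add, map_sub, map_mul, map_pow,
        map_one, hv0, hv1, hv2, hv3, hv4, hv5, pow_zero, one_mul]
      linear_combination (C ε ^ 4 * (X 5 ^ 2) : R6) * hC6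
    rw [himg, ← smul_eq_C_mul]
    exact Submodule.smul_mem _ _ (Submodule.subset_span (Set.mem_insert_of_mem _ (Set.mem_insert_of_mem _ rfl)))

private lemma hTw1 : Submodule.map Tw.toLinearMap V0m ≤ V0m := by
  rw [V0m, Submodule.map_span]
  refine Submodule.span_le.mpr ?_
  rintro _ ⟨v, hv, rfl⟩
  simp only [Set.mem_insert_iff, Set.mem_singleton_iff] at hv
  rw [SetLike.mem_coe]
  rcases hv with rfl | rfl | rfl
  · have himg : Tw.toLinearMap (X 0 ^ 2 - X 3 ^ 2 : R6) = C ((1 : ℂ)) * (X 0 ^ 2 - X 3 ^ 2) := by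
      simp only [AlgHom.toLinearMap_apply, Tw, aeval_X, map_add, map_sub, map_mul, map_pow,
        map_one, hv0, hv1, hv2, hv3, hv4, hv5, pow_zero, one_mul]
      linear_combination -((X 3 ^ 2) : R6) * hC6
    rw [himg, ← smul_eq_C_mul]
    exact Submodule.smul_mem _ _ (Submodule.subset_span (Set.mem_insert _ _))
  · have himg : Tw.toLinearMap (X 1 ^ 2 - X 4 ^ 2 : R6) = C (ε ^ 2) * (X 1 ^ 2 - X 4 ^ 2) := by
      simp only [AlgHom.toLinearMap_apply, Tw, aeval_X, map_add, map_sub, map_mul, map_pow,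
        map_one, hv0, hv1, hv2, hv3, hv4, hv5, pow_zero, one_mul]
      linear_combination -(C ε ^ 2 * (X 4 ^ 2) : R6) * hC6
    rw [himg, ← smul_eq_C_mul]
    exact Submodule.smul_mem _ _ (Submodule.subset_span (Set.mem_insert_of_mem _ (Set.mem_insert _ _)))
  · have himg : Tw.toLinearMap (X 2 ^ 2 - X 5 ^ 2 : R6) = C (ε ^ 4) * (X 2 ^ 2 - X 5 ^ 2) := by
      simp only [AlgHom.toLinearMap_apply, Tw, aeval_X, map_add, map_sub, map_mul, map_pow,
        map_one, hv0, hv1, hv2, hv3, hv4, hv5, pow_zero, one_mul]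
      linear_combination -(C ε ^ 4 * (X 5 ^ 2) : R6) * hC6
    rw [himg, ← smul_eq_C_mul]
    exact Submodule.smul_mem _ _ (Submodule.subset_span (Set.mem_insert_of_mem _ (Set.mem_insert_of_mem _ rfl)))

private lemma hTw2 : Submodule.map Tw.toLinearMap V1p ≤ V1p := by
  rw [V1p, Submodule.map_span]
  refine Submodule.span_le.mpr ?_
  rintro _ ⟨v, hv, rfl⟩
  simp only [Set.mem_insert_iff, Set.mem_singleton_iff] at hv
  rw [SetLike.mem_coe]
  rcases hv with rfl | rfl | rfl
  · have himg : Tw.toLinearMap (X 0 * X 1 + X 3 * X 4 : R6) = C (ε) * (X 0 * X 1 + X 3 * X 4) := by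
      simp only [AlgHom.toLinearMap_apply, Tw, aeval_X, map_add, map_sub, map_mul, map_pow,
        map_one, hv0, hv1, hv2, hv3, hv4, hv5, pow_zero, one_mul]
      linear_combination (C ε ^ 1 * (X 3 * X 4) : R6) * hC6
    rw [himg, ← smul_eq_C_mul]
    exact Submodule.smul_mem _ _ (Submodule.subset_span (Set.mem_insert _ _))
  · have himg : Tw.toLinearMap (X 1 * X 2 + X 4 * X 5 : R6) = C (ε ^ 3) * (X 1 * X 2 + X 4 * X 5) := by
      simp only [AlgHom.toLinearMap_apply, Tw, aeval_X, map_add, map_sub, map_mul, map_pow,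
        map_one, hv0, hv1, hv2, hv3, hv4, hv5, pow_zero, one_mul]
      linear_combination (C ε ^ 3 * (X 4 * X 5) : R6) * hC6
    rw [himg, ← smul_eq_C_mul]
    exact Submodule.smul_mem _ _ (Submodule.subset_span (Set.mem_insert_of_mem _ (Set.mem_insert _ _)))
  · have himg : Tw.toLinearMap (X 2 * X 3 + X 5 * X 0 : R6) = C (ε ^ 5) * (X 2 * X 3 + X 5 * X 0) := by
      simp only [AlgHom.toLinearMap_apply, Tw, aeval_X, map_add, map_sub, map_mul, map_pow,
        map_one, hv0, hv1, hv2, hv3, hv4, hv5, pow_zero, one_mul]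
      ring
    rw [himg, ← smul_eq_C_mul]
    exact Submodule.smul_mem _ _ (Submodule.subset_span (Set.mem_insert_of_mem _ (Set.mem_insert_of_mem _ rfl)))

private lemma hTw3 : Submodule.map Tw.toLinearMap V1m ≤ V1m := by
  rw [V1m, Submodule.map_span]
  refine Submodule.span_le.mpr ?_
  rintro _ ⟨v, hv, rfl⟩
  simp only [Set.mem_insert_iff, Set.mem_singleton_iff] at hv
  rw [SetLike.mem_coe]
  rcases hv with rfl | rfl | rfl
  · have himg : Tw.toLinearMap (X 0 * X 1 - X 3 * X 4 : R6) = C (ε) * (X 0 * X 1 - X 3 * X 4) := by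
      simp only [AlgHom.toLinearMap_apply, Tw, aeval_X, map_add, map_sub, map_mul, map_pow,
        map_one, hv0, hv1, hv2, hv3, hv4, hv5, pow_zero, one_mul]
      linear_combination -(C ε ^ 1 * (X 3 * X 4) : R6) * hC6
    rw [himg, ← smul_eq_C_mul]
    exact Submodule.smul_mem _ _ (Submodule.subset_span (Set.mem_insert _ _))
  · have himg : Tw.toLinearMap (X 1 * X 2 - X 4 * X 5 : R6) = C (ε ^ 3) * (X 1 * X 2 - X 4 * X 5) := by
      simp only [AlgHom.toLinearMap_apply, Tw, aeval_X, map_add, map_sub, map_mul, map_pow,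
        map_one, hv0, hv1, hv2, hv3, hv4, hv5, pow_zero, one_mul]
      linear_combination -(C ε ^ 3 * (X 4 * X 5) : R6) * hC6
    rw [himg, ← smul_eq_C_mul]
    exact Submodule.smul_mem _ _ (Submodule.subset_span (Set.mem_insert_of_mem _ (Set.mem_insert _ _)))
  · have himg : Tw.toLinearMap (X 2 * X 3 - X 5 * X 0 : R6) = C (ε ^ 5) * (X 2 * X 3 - X 5 * X 0) := by
      simp only [AlgHom.toLinearMap_apply, Tw, aeval_X, map_add, map_sub, map_mul, map_pow,
        map_one, hv0, hv1, hv2, hv3, hv4, hv5, pow_zero, one_mul]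
      ring
    rw [himg, ← smul_eq_C_mul]
    exact Submodule.smul_mem _ _ (Submodule.subset_span (Set.mem_insert_of_mem _ (Set.mem_insert_of_mem _ rfl)))

private lemma hTw4 : Submodule.map Tw.toLinearMap V2p ≤ V2p := by
  rw [V2p, Submodule.map_span]
  refine Submodule.span_le.mpr ?_
  rintro _ ⟨v, hv, rfl⟩
  simp only [Set.mem_insert_iff, Set.mem_singleton_iff] at hv
  rw [SetLike.mem_coe]
  rcases hv with rfl | rfl | rfl
  · have himg : Tw.toLinearMap (X 0 * X 2 + X 3 * X 5 : R6) = C (ε ^ 2) * (X 0 * X 2 + X 3 * X 5) := by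
      simp only [AlgHom.toLinearMap_apply, Tw, aeval_X, map_add, map_sub, map_mul, map_pow,
        map_one, hv0, hv1, hv2, hv3, hv4, hv5, pow_zero, one_mul]
      linear_combination (C ε ^ 2 * (X 3 * X 5) : R6) * hC6
    rw [himg, ← smul_eq_C_mul]
    exact Submodule.smul_mem _ _ (Submodule.subset_span (Set.mem_insert _ _))
  · have himg : Tw.toLinearMap (X 1 * X 3 + X 4 * X 0 : R6) = C (ε ^ 4) * (X 1 * X 3 + X 4 * X 0) := by
      simp only [AlgHom.toLinearMap_apply, Tw, aeval_X, map_add, map_sub, map_mul, map_pow,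
        map_one, hv0, hv1, hv2, hv3, hv4, hv5, pow_zero, one_mul]
      ring
    rw [himg, ← smul_eq_C_mul]
    exact Submodule.smul_mem _ _ (Submodule.subset_span (Set.mem_insert_of_mem _ (Set.mem_insert _ _)))
  · have himg : Tw.toLinearMap (X 2 * X 4 + X 5 * X 1 : R6) = C ((1 : ℂ)) * (X 2 * X 4 + X 5 * X 1) := by
      simp only [AlgHom.toLinearMap_apply, Tw, aeval_X, map_add, map_sub, map_mul, map_pow,
        map_one, hv0, hv1, hv2, hv3, hv4, hv5, pow_zero, one_mul]
      linear_combination ((X 2 * X 4) : R6) * hC6 + ((X 5 * X 1) : R6) * hC6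
    rw [himg, ← smul_eq_C_mul]
    exact Submodule.smul_mem _ _ (Submodule.subset_span (Set.mem_insert_of_mem _ (Set.mem_insert_of_mem _ rfl)))

private lemma hTw5 : Submodule.map Tw.toLinearMap V2m ≤ V2m := by
  rw [V2m, Submodule.map_span]
  refine Submodule.span_le.mpr ?_
  rintro _ ⟨v, hv, rfl⟩
  simp only [Set.mem_insert_iff, Set.mem_singleton_iff] at hv
  rw [SetLike.mem_coe]
  rcases hv with rfl | rfl | rfl
  · have himg : Tw.toLinearMap (X 0 * X 2 - X 3 * X 5 : R6) = C (ε ^ 2) * (X 0 * X 2 - X 3 * X 5) := by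
      simp only [AlgHom.toLinearMap_apply, Tw, aeval_X, map_add, map_sub, map_mul, map_pow,
        map_one, hv0, hv1, hv2, hv3, hv4, hv5, pow_zero, one_mul]
      linear_combination -(C ε ^ 2 * (X 3 * X 5) : R6) * hC6
    rw [himg, ← smul_eq_C_mul]
    exact Submodule.smul_mem _ _ (Submodule.subset_span (Set.mem_insert _ _))
  · have himg : Tw.toLinearMap (X 1 * X 3 - X 4 * X 0 : R6) = C (ε ^ 4) * (X 1 * X 3 - X 4 * X 0) := by
      simp only [AlgHom.toLinearMap_apply, Tw, aeval_X, map_add, map_sub, map_mul, map_pow,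
        map_one, hv0, hv1, hv2, hv3, hv4, hv5, pow_zero, one_mul]
      ring
    rw [himg, ← smul_eq_C_mul]
    exact Submodule.smul_mem _ _ (Submodule.subset_span (Set.mem_insert_of_mem _ (Set.mem_insert _ _)))
  · have himg : Tw.toLinearMap (X 2 * X 4 - X 5 * X 1 : R6) = C ((1 : ℂ)) * (X 2 * X 4 - X 5 * X 1) := by
      simp only [AlgHom.toLinearMap_apply, Tw, aeval_X, map_add, map_sub, map_mul, map_pow,
        map_one, hv0, hv1, hv2, hv3, hv4, hv5, pow_zero, one_mul]
      linear_combination ((X 2 * X 4) : R6) * hC6 - ((X 5 * X 1) : R6) * hC6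
    rw [himg, ← smul_eq_C_mul]
    exact Submodule.smul_mem _ _ (Submodule.subset_span (Set.mem_insert_of_mem _ (Set.mem_insert_of_mem _ rfl)))

private lemma hTw6 : Submodule.map Tw.toLinearMap V3 ≤ V3 := by
  rw [V3, Submodule.map_span]
  refine Submodule.span_le.mpr ?_
  rintro _ ⟨v, hv, rfl⟩
  simp only [Set.mem_insert_iff, Set.mem_singleton_iff] at hv
  rw [SetLike.mem_coe]
  rcases hv with rfl | rfl | rfl
  · have himg : Tw.toLinearMap (X 0 * X 3 : R6) = C (ε ^ 3) * (X 0 * X 3) := by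
      simp only [AlgHom.toLinearMap_apply, Tw, aeval_X, map_add, map_sub, map_mul, map_pow,
        map_one, hv0, hv1, hv2, hv3, hv4, hv5, pow_zero, one_mul]
      ring
    rw [himg, ← smul_eq_C_mul]
    exact Submodule.smul_mem _ _ (Submodule.subset_span (Set.mem_insert _ _))
  · have himg : Tw.toLinearMap (X 1 * X 4 : R6) = C (ε ^ 5) * (X 1 * X 4) := by
      simp only [AlgHom.toLinearMap_apply, Tw, aeval_X, map_add, map_sub, map_mul, map_pow,
        map_one, hv0, hv1, hv2, hv3, hv4, hv5, pow_zero, one_mul]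
      ring
    rw [himg, ← smul_eq_C_mul]
    exact Submodule.smul_mem _ _ (Submodule.subset_span (Set.mem_insert_of_mem _ (Set.mem_insert _ _)))
  · have himg : Tw.toLinearMap (X 2 * X 5 : R6) = C (ε) * (X 2 * X 5) := by
      simp only [AlgHom.toLinearMap_apply, Tw, aeval_X, map_add, map_sub, map_mul, map_pow,
        map_one, hv0, hv1, hv2, hv3, hv4, hv5, pow_zero, one_mul]
      linear_combination (C ε ^ 1 * (X 2 * X 5) : R6) * hC6
    rw [himg, ← smul_eq_C_mul]
    exact Submodule.smul_mem _ _ (Submodule.subset_span (Set.mem_insert_of_mem _ (Set.mem_insert_of_mem _ rfl)))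

private lemma hinv : ∀ i, Submodule.map Sh.toLinearMap (Vfam i) ≤ Vfam i ∧
    Submodule.map Tw.toLinearMap (Vfam i) ≤ Vfam i := by
  intro i
  fin_cases i
  exacts [⟨hSh0, hTw0⟩, ⟨hSh1, hTw1⟩, ⟨hSh2, hTw2⟩, ⟨hSh3, hTw3⟩, ⟨hSh4, hTw4⟩,
    ⟨hSh5, hTw5⟩, ⟨hSh6, hTw6⟩]

/-- `P₂` is the internal direct sum of the seven subspaces `V₀⁺, V₀⁻, V₁⁺, V₁⁻, V₂⁺, V₂⁻, V₃`,
and each of the seven is invariant under both `S` and `T`. -/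
theorem P2_direct_sum_decomposition :
    iSupIndep Vfam ∧ (⨆ i, Vfam i) = P2 ∧
    (∀ i, Submodule.map Sh.toLinearMap (Vfam i) ≤ Vfam i ∧
      Submodule.map Tw.toLinearMap (Vfam i) ≤ Vfam i) := by
  exact ⟨hindep, hsup, hinv⟩
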